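/- Let s(n) be the number of {Empty, Blue, Red}-colorings of Fin n with no adjacent pair colored Blue-Red or Red-Blue. Then 2·s(n) = (1+√2)^(n+1) + (1-√2)^(n+1) for all n ≥ 0, as an identity of real numbers. -/

import Mathlib

inductive Color : Type
  | Empty | Blue | Red
  deriving DecidableEq

instance : Fintype Color where
  elems := {Color.Empty, Color.Blue, Color.Red}
  complete := fun x => by cases x <;> simp

/-- Number of Snort positions on the path `P_n`. -/
def snortPath (n : ℕ) : ℕ :=
  Fintype.card {c : Fin n → Color //
    ∀ i j : Fin n, (j : ℕ) = (i : ℕ) + 1 →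
      ¬((c i = Color.Blue ∧ c j = Color.Red) ∨ (c i = Color.Red ∧ c j = Color.Blue))}

def compat (a b : Color) : Prop :=
  ¬((a = Color.Blue ∧ b = Color.Red) ∨ (a = Color.Red ∧ b = Color.Blue))

instance : DecidablePred fun p : Color × Color => compat p.1 p.2 := by
  intro p; unfold compat; infer_instance

instance (a b : Color) : Decidable (compat a b) := by unfold compat; infer_instance

def valid (n : ℕ) (c : Fin n → Color) : Prop :=
  ∀ i j : Fin n, (j : ℕ) = (i : ℕ) + 1 → compat (c i) (c j)

instance (n : ℕ) : DecidablePred (valid n) := fun _ => by unfold valid; infer_instance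

lemma snortPath_eq (n : ℕ) :
    snortPath n = (Finset.univ.filter (valid n)).card := by
  rw [snortPath, Fintype.card_subtype]
  rfl


def G (n : ℕ) (a : Color) : ℕ :=
  (Finset.univ.filter (fun c : Fin (n+1) → Color => valid (n+1) c ∧ c 0 = a)).card

lemma valid_cons (n : ℕ) (a : Color) (c : Fin (n+1) → Color) :
    valid (n+2) (Fin.cons a c) ↔ compat a (c 0) ∧ valid (n+1) c := by
  constructor
  · intro h
    refine ⟨?_, ?_⟩
    · have := h 0 1 rfl
      have h1 : (1 : Fin (n+2)) = Fin.succ 0 := by ext; simp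
      rw [h1] at this
      simpa using this
    · intro i j hij
      have := h i.succ j.succ (by simp [Fin.val_succ, hij])
      simpa using this
  · rintro ⟨h1, h2⟩ i j hij
    rcases Fin.eq_zero_or_eq_succ j with rfl | ⟨j', rfl⟩
    · simp at hij
    rcases Fin.eq_zero_or_eq_succ i with rfl | ⟨i', rfl⟩
    · have : j' = 0 := by
        have : (j' : ℕ) = 0 := by simpa [Fin.val_succ] using hij
        exact Fin.ext this
      subst this
      simpa using h1
    · have hij' : (j' : ℕ) = (i' : ℕ) + 1 := by simpa [Fin.val_succ] using hij
      simpa using h2 i' j' hij'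

lemma G_succ (n : ℕ) (a : Color) :
    G (n+1) a =
      (Finset.univ.filter
        (fun c : Fin (n+1) → Color => valid (n+1) c ∧ compat a (c 0))).card := by
  rw [G]
  refine Finset.card_bij' (fun c _ => Fin.tail c) (fun c _ => Fin.cons a c) ?hi ?hj ?li ?ri
  case hi =>
    intro c hc
    simp only [Finset.mem_filter, Finset.mem_univ, true_and] at hc ⊢
    obtain ⟨hv, h0⟩ := hc
    have hc' : c = Fin.cons a (Fin.tail c) := by
      rw [← h0]; exact (Fin.cons_self_tail c).symm
    rw [hc', valid_cons] at hv
    exact ⟨hv.2, by simpa [Fin.tail] using hv.1⟩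
  case hj =>
    intro c hc
    simp only [Finset.mem_filter, Finset.mem_univ, true_and] at hc ⊢
    exact ⟨(valid_cons n a c).2 ⟨hc.2, hc.1⟩, by simp⟩
  case li =>
    intro c hc
    simp only [Finset.mem_filter, Finset.mem_univ, true_and] at hc
    show Fin.cons a (Fin.tail c) = c
    rw [← hc.2, Fin.cons_self_tail]
  case ri =>
    intro c _
    exact Fin.tail_cons (α := fun _ => Color) a c

lemma snortPath_succ (n : ℕ) : snortPath (n+1) = ∑ a : Color, G n a := by
  rw [snortPath_eq]
  rw [Finset.card_eq_sum_card_fiberwise (f := fun c => c 0) (t := Finset.univ)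
    (fun _ _ => Finset.mem_univ _)]
  refine Finset.sum_congr rfl fun a _ => ?_
  rw [G, Finset.filter_filter]

lemma G_succ' (n : ℕ) (a : Color) :
    G (n+1) a = ∑ b : Color, if compat a b then G n b else 0 := by
  rw [G_succ]
  rw [Finset.card_eq_sum_card_fiberwise (f := fun c => c 0) (t := Finset.univ)
    (fun _ _ => Finset.mem_univ _)]
  refine Finset.sum_congr rfl fun b _ => ?_
  rw [Finset.filter_filter]
  by_cases h : compat a b
  · rw [if_pos h, G]
    congr 1
    apply Finset.filter_congr
    intro c _
    constructor
    · rintro ⟨⟨hv, _⟩, h0⟩; exact ⟨hv, h0⟩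
    · rintro ⟨hv, h0⟩; exact ⟨⟨hv, h0 ▸ h⟩, h0⟩
  · rw [if_neg h, Finset.card_eq_zero, Finset.filter_eq_empty_iff]
    rintro c - ⟨⟨-, hc⟩, h0⟩
    exact h (h0 ▸ hc)

lemma sum_color (f : Color → ℕ) :
    ∑ b : Color, f b = f Color.Empty + f Color.Blue + f Color.Red := by
  have : (Finset.univ : Finset Color) = {Color.Empty, Color.Blue, Color.Red} := by decide
  rw [this]
  rw [Finset.sum_insert (by decide), Finset.sum_insert (by decide), Finset.sum_singleton]
  ring

lemma G_succ_empty (n : ℕ) :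
    G (n+1) Color.Empty = G n Color.Empty + G n Color.Blue + G n Color.Red := by
  rw [G_succ', sum_color]; simp [compat]

lemma G_succ_blue (n : ℕ) :
    G (n+1) Color.Blue = G n Color.Empty + G n Color.Blue := by
  rw [G_succ', sum_color]; simp [compat]

lemma G_succ_red (n : ℕ) :
    G (n+1) Color.Red = G n Color.Empty + G n Color.Red := by
  rw [G_succ', sum_color]; simp [compat]

lemma G_blue_eq_red (n : ℕ) : G n Color.Blue = G n Color.Red := by
  induction n with
  | zero => decide
  | succ n ih => rw [G_succ_blue, G_succ_red, ih]

lemma G_empty_eq (n : ℕ) : G n Color.Empty = snortPath n := by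
  cases n with
  | zero =>
    have h : snortPath 0 = 1 := by rw [snortPath_eq]; decide
    rw [h]; decide
  | succ n => rw [G_succ_empty, snortPath_succ, sum_color]

lemma snortPath_rec (n : ℕ) :
    snortPath (n+2) = 2 * snortPath (n+1) + snortPath n := by
  have h2 : snortPath (n+2) = _ := snortPath_succ (n+1)
  have h1 : snortPath (n+1) = _ := snortPath_succ n
  rw [sum_color] at h2 h1
  rw [G_succ_empty, G_succ_blue, G_succ_red] at h2
  have hE := G_empty_eq n
  have hBR := G_blue_eq_red n
  omega

lemma snortPath_zero : snortPath 0 = 1 := by rw [snortPath_eq]; decide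

lemma snortPath_one : snortPath 1 = 3 := by rw [snortPath_eq]; decide

theorem snortPath_closed_form (n : ℕ) :
    (2 : ℝ) * snortPath n =
      (1 + Real.sqrt 2) ^ (n + 1) + (1 - Real.sqrt 2) ^ (n + 1) := by
  have hs : Real.sqrt 2 ^ 2 = 2 := Real.sq_sqrt (by norm_num)
  induction n using Nat.twoStepInduction with
  | zero => rw [snortPath_zero]; push_cast; ring
  | one => rw [snortPath_one]; push_cast; nlinarith [hs]
  | more n ih1 ih2 =>
    have hcast : ((snortPath (n + 2) : ℝ)) =
        2 * (snortPath (n + 1) : ℝ) + (snortPath n : ℝ) := by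
      rw [snortPath_rec n]; push_cast; ring
    rw [hcast]
    have hx : (1 + Real.sqrt 2) ^ (n + 2 + 1) =
        2 * (1 + Real.sqrt 2) ^ (n + 1 + 1) + (1 + Real.sqrt 2) ^ (n + 1) := by
      have h1 : (1 + Real.sqrt 2) ^ (n + 2 + 1) =
          (1 + Real.sqrt 2) ^ (n + 1) * ((1 + Real.sqrt 2) ^ 2) := by ring
      have h2 : (1 + Real.sqrt 2) ^ 2 = 2 * (1 + Real.sqrt 2) + 1 := by nlinarith [hs]
      rw [h1, h2]; ring
    have hy : (1 - Real.sqrt 2) ^ (n + 2 + 1) =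
        2 * (1 - Real.sqrt 2) ^ (n + 1 + 1) + (1 - Real.sqrt 2) ^ (n + 1) := by
      have h1 : (1 - Real.sqrt 2) ^ (n + 2 + 1) =
          (1 - Real.sqrt 2) ^ (n + 1) * ((1 - Real.sqrt 2) ^ 2) := by ring
      have h2 : (1 - Real.sqrt 2) ^ 2 = 2 * (1 - Real.sqrt 2) + 1 := by nlinarith [hs]
      rw [h1, h2]; ring
    rw [hx, hy]
    linarith [ih1, ih2]
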